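/- For all integers n ≥ 2 and m ≥ 1: if 0 ≤ r ≤ m−1, the minimum Hamming weight of a nonzero codeword of D_n(r,m) equals 2^{r+1}; and if 0 ≤ r ≤ m, the minimum Hamming weight of a nonzero codeword of C_n(r,m) equals n^{m−r}. -/

import Mathlib

open Finset

/-- The `l`-th subvector in the concatenation decomposition:
`(subvec v l) i' = v (i'|l)`. -/
def subvec {n m : ℕ} (v : (Fin (m + 1) → Fin n) → ZMod 2) (l : Fin n) :
    (Fin m → Fin n) → ZMod 2 :=
  fun i' => v (Fin.snoc i' l)

/-- The Berman code `D_n(r,m)`, defined recursively. -/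
def BermanD (n : ℕ) : (m : ℕ) → ℕ → Set ((Fin m → Fin n) → ZMod 2)
  | 0, _ => {0}
  | m + 1, r =>
    if r = 0 then {v | ∑ i, v i = 0}
    else if m + 1 ≤ r then {0}
    else {v | (∀ l : Fin n, subvec v l ∈ BermanD n m (r - 1)) ∧
              (fun i' => ∑ l : Fin n, subvec v l i') ∈ BermanD n m r}

/-- The dual Berman code `C_n(r,m)`, defined recursively. -/
def BermanC (n : ℕ) : (m : ℕ) → ℕ → Set ((Fin m → Fin n) → ZMod 2)
  | 0, _ => Set.univ
  | m + 1, r =>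
    if r = 0 then {v | ∃ c : ZMod 2, ∀ i, v i = c}
    else if m + 1 ≤ r then Set.univ
    else {v | ∃ (u : (Fin m → Fin n) → ZMod 2) (w : Fin n → (Fin m → Fin n) → ZMod 2),
            u ∈ BermanC n m r ∧
            (∀ l : Fin n, (l : ℕ) < n - 1 → w l ∈ BermanC n m (r - 1)) ∧
            (∀ l : Fin n, (l : ℕ) = n - 1 → w l = 0) ∧
            (∀ l : Fin n, subvec v l = u + w l)}

/-- Hamming weight of a binary vector. -/
def hwt {n m : ℕ} (v : (Fin m → Fin n) → ZMod 2) : ℕ :=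
  (Finset.univ.filter fun i => v i ≠ 0).card

/-- `preceq j i` means `j ⪯ i`: for every position `k`, either `j k = 0` or `j k = i k`. -/
def preceq {n m : ℕ} (j i : Fin m → Fin n) : Prop :=
  ∀ k, (j k : ℕ) = 0 ∨ j k = i k

instance {n m : ℕ} (j i : Fin m → Fin n) : Decidable (preceq j i) :=
  inferInstanceAs (Decidable (∀ k, (j k : ℕ) = 0 ∨ j k = i k))

/-- Hamming weight of an index tuple. -/
def wtTuple {n m : ℕ} (i : Fin m → Fin n) : ℕ :=
  (Finset.univ.filter fun k => (i k : ℕ) ≠ 0).card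

/-- The vector `c_m(i')`: the indicator of `{i : i ⪯ i'}`. -/
def cVec {n : ℕ} (m : ℕ) (i' : Fin m → Fin n) : (Fin m → Fin n) → ZMod 2 :=
  fun i => if preceq i i' then 1 else 0

/-- The vector `d_m(i')`: the indicator of `{i : i' ⪯ i}`. -/
def dVec {n : ℕ} (m : ℕ) (i' : Fin m → Fin n) : (Fin m → Fin n) → ZMod 2 :=
  fun i => if preceq i' i then 1 else 0

/-- The matrix `A_m = A_1^{⊗m}`: its entry in row `i` and column `j` is `1` iff `j ⪯ i`. -/
def Amat (n m : ℕ) : Matrix (Fin m → Fin n) (Fin m → Fin n) (ZMod 2) :=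
  fun i j => if preceq j i then 1 else 0

-- auxiliary lemmas
lemma hwt_pos {n m : ℕ} {v : (Fin m → Fin n) → ZMod 2} (hv : v ≠ 0) : 1 ≤ hwt v := by
  obtain ⟨i, hi⟩ : ∃ i, v i ≠ 0 := by
    by_contra h; push_neg at h; exact hv (funext fun i => h i)
  exact Finset.card_pos.mpr ⟨i, by simp [hi]⟩

def snocEquiv (n m : ℕ) : ((Fin m → Fin n) × Fin n) ≃ (Fin (m + 1) → Fin n) where
  toFun p := Fin.snoc p.1 p.2
  invFun i := (Fin.init i, i (Fin.last m))
  left_inv p := by simp [Fin.init_snoc, Fin.snoc_last]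
  right_inv i := by simp [Fin.snoc_init_self]

lemma hwt_eq_sum_subvec {n m : ℕ} (v : (Fin (m + 1) → Fin n) → ZMod 2) :
    hwt v = ∑ l : Fin n, hwt (subvec v l) := by
  simp only [hwt, Finset.card_filter]
  have h := Fintype.sum_equiv (snocEquiv n m)
    (fun p : (Fin m → Fin n) × Fin n => if v (Fin.snoc p.1 p.2) ≠ 0 then (1:ℕ) else 0)
    (fun i => if v i ≠ 0 then (1:ℕ) else 0) (fun p => rfl)
  rw [← h, Fintype.sum_prod_type, Finset.sum_comm]
  rfl

lemma eq_zero_of_subvec {n m : ℕ} {v : (Fin (m + 1) → Fin n) → ZMod 2}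
    (h : ∀ l, subvec v l = 0) : v = 0 := by
  funext i
  have := congrFun (h (i (Fin.last m))) (Fin.init i)
  simpa [subvec, Fin.snoc_init_self] using this

lemma hwt_sumvec_le {n m : ℕ} (w : Fin n → (Fin m → Fin n) → ZMod 2) :
    hwt (fun i => ∑ l, w l i) ≤ ∑ l, hwt (w l) := by
  rw [hwt]
  calc (Finset.univ.filter fun i => (∑ l, w l i) ≠ 0).card
      ≤ (Finset.univ.biUnion fun l => Finset.univ.filter fun i => w l i ≠ 0).card := by
        apply Finset.card_le_card
        intro i hi
        simp only [Finset.mem_filter, Finset.mem_univ, true_and] at hi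
        obtain ⟨l, hl⟩ : ∃ l, w l i ≠ 0 := by
          by_contra h; push_neg at h; exact hi (by simp [h])
        exact Finset.mem_biUnion.2 ⟨l, Finset.mem_univ l, by simp [hl]⟩
    _ ≤ ∑ l, hwt (w l) := Finset.card_biUnion_le

lemma sum_eq_hwt {n m : ℕ} (v : (Fin m → Fin n) → ZMod 2) :
    ∑ i, v i = (hwt v : ZMod 2) := by
  rw [hwt, Finset.card_filter, Nat.cast_sum]
  apply Finset.sum_congr rfl
  intro i _
  rcases (by decide : ∀ x : ZMod 2, x = 0 ∨ x = 1) (v i) with h | h <;> simp [h]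

lemma wtTuple_le {n m : ℕ} (i : Fin m → Fin n) : wtTuple i ≤ m := by
  simpa [wtTuple] using Finset.card_filter_le Finset.univ (fun k => (i k : ℕ) ≠ 0)

lemma filter_pi_eq {n m : ℕ} (p : Fin m → Fin n → Prop) [∀ k a, Decidable (p k a)] :
    (Finset.univ.filter fun i : Fin m → Fin n => ∀ k, p k (i k)) =
      Fintype.piFinset fun k => Finset.univ.filter (p k) := by
  ext i; simp [Fintype.mem_piFinset]

lemma hwt_ite {n m : ℕ} (p : (Fin m → Fin n) → Prop) [DecidablePred p] :
    hwt (fun i => if p i then (1 : ZMod 2) else 0) = (Finset.univ.filter p).card := by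
  unfold hwt; congr 1; ext i; by_cases h : p i <;> simp [h]

lemma prod_ite_card {m : ℕ} (P : Fin m → Prop) [DecidablePred P] (a : ℕ) :
    ∏ k, (if P k then (1:ℕ) else a) = a ^ (Finset.univ.filter fun k => ¬ P k).card := by
  rw [Finset.prod_ite, Finset.prod_const, Finset.prod_const, one_pow, one_mul]

lemma hwt_cVec {n m : ℕ} (i' : Fin m → Fin n) : hwt (cVec m i') = 2 ^ wtTuple i' := by
  have h1 : hwt (cVec m i') = (Finset.univ.filter fun i => preceq i i').card :=
    hwt_ite (fun i => preceq i i')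
  have h2 : (Finset.univ.filter fun i : Fin m → Fin n => preceq i i')
      = Fintype.piFinset (fun k => Finset.univ.filter fun a : Fin n => (a:ℕ) = 0 ∨ a = i' k) := by
    ext i; simp only [Finset.mem_filter, Finset.mem_univ, true_and, Fintype.mem_piFinset]; simp [preceq]
  rw [h1, h2, Fintype.card_piFinset]
  have h3 : ∀ k, (Finset.univ.filter fun a : Fin n => (a : ℕ) = 0 ∨ a = i' k).card
      = if (i' k : ℕ) = 0 then 1 else 2 := by
    intro k
    by_cases h : (i' k : ℕ) = 0
    · rw [if_pos h]
      have he : (Finset.univ.filter fun a : Fin n => (a : ℕ) = 0 ∨ a = i' k) = {i' k} := by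
        ext a
        simp only [Finset.mem_filter, Finset.mem_univ, true_and, Finset.mem_singleton]
        constructor
        · rintro (ha | ha)
          · exact Fin.ext (by omega)
          · exact ha
        · rintro rfl; exact Or.inl h
      rw [he, Finset.card_singleton]
    · rw [if_neg h]
      have hn0 : 0 < n := (i' k).pos
      have he : (Finset.univ.filter fun a : Fin n => (a : ℕ) = 0 ∨ a = i' k)
          = {(⟨0, hn0⟩ : Fin n), i' k} := by
        ext a
        simp only [Finset.mem_filter, Finset.mem_univ, true_and, Finset.mem_insert,
          Finset.mem_singleton]
        constructor
        · rintro (ha | ha)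
          · exact Or.inl (Fin.ext ha)
          · exact Or.inr ha
        · rintro (rfl | rfl)
          · exact Or.inl rfl
          · exact Or.inr rfl
      rw [he, Finset.card_pair (by intro hh; exact h (by rw [← hh]))]
  calc ∏ k, (Finset.univ.filter fun a : Fin n => (a : ℕ) = 0 ∨ a = i' k).card
      = ∏ k, if (i' k : ℕ) = 0 then 1 else 2 := Finset.prod_congr rfl (fun k _ => h3 k)
    _ = 2 ^ wtTuple i' := by
        rw [prod_ite_card]
        rfl

lemma hwt_dVec {n m : ℕ} (i' : Fin m → Fin n) : hwt (dVec m i') = n ^ (m - wtTuple i') := by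
  have h1 : hwt (dVec m i') = (Finset.univ.filter fun i => preceq i' i).card :=
    hwt_ite (fun i => preceq i' i)
  have h2 : (Finset.univ.filter fun i : Fin m → Fin n => preceq i' i)
      = Fintype.piFinset (fun k => Finset.univ.filter fun a : Fin n => (i' k : ℕ) = 0 ∨ i' k = a) := by
    ext i; simp only [Finset.mem_filter, Finset.mem_univ, true_and, Fintype.mem_piFinset]; simp [preceq]
  rw [h1, h2, Fintype.card_piFinset]
  have h3 : ∀ k, (Finset.univ.filter fun a : Fin n => (i' k : ℕ) = 0 ∨ i' k = a).card
      = if (i' k : ℕ) = 0 then n else 1 := by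
    intro k
    by_cases h : (i' k : ℕ) = 0
    · rw [if_pos h]
      have he : (Finset.univ.filter fun a : Fin n => (i' k : ℕ) = 0 ∨ i' k = a) = Finset.univ := by
        ext a; simp [h]
      rw [he, Finset.card_univ, Fintype.card_fin]
    · rw [if_neg h]
      have he : (Finset.univ.filter fun a : Fin n => (i' k : ℕ) = 0 ∨ i' k = a) = {i' k} := by
        ext a
        simp only [Finset.mem_filter, Finset.mem_univ, true_and, Finset.mem_singleton]
        constructor
        · rintro (ha | ha)
          · exact absurd ha h
          · exact ha.symm
        · rintro rfl; exact Or.inr rfl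
      rw [he, Finset.card_singleton]
  have h4 : (Finset.univ.filter fun k : Fin m => (i' k : ℕ) = 0).card = m - wtTuple i' := by
    have := Finset.card_filter_add_card_filter_not
      (s := Finset.univ) (p := fun k : Fin m => (i' k : ℕ) = 0)
    have hu : (Finset.univ : Finset (Fin m)).card = m := by simp
    have hwtt : (Finset.univ.filter fun k : Fin m => ¬ (i' k : ℕ) = 0).card = wtTuple i' := rfl
    omega
  calc ∏ k, (Finset.univ.filter fun a : Fin n => (i' k : ℕ) = 0 ∨ i' k = a).card
      = ∏ k, if ¬ (i' k : ℕ) = 0 then (1:ℕ) else n := by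
        refine Finset.prod_congr rfl (fun k _ => ?_)
        rw [h3]; by_cases h : (i' k : ℕ) = 0 <;> simp [h]
    _ = n ^ (m - wtTuple i') := by
        rw [prod_ite_card, ← h4]
        congr 1
        simp

lemma exists_wtTuple {n m : ℕ} (hn : 2 ≤ n) (t : ℕ) (ht : t ≤ m) :
    ∃ i' : Fin m → Fin n, wtTuple i' = t := by
  refine ⟨fun k => if (k : ℕ) < t then ⟨1, by omega⟩ else ⟨0, by omega⟩, ?_⟩
  unfold wtTuple
  have he : (Finset.univ.filter fun k : Fin m =>
      ((if (k : ℕ) < t then (⟨1, by omega⟩ : Fin n) else ⟨0, by omega⟩) : Fin n).val ≠ 0)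
      = Finset.univ.filter fun k : Fin m => (k : ℕ) < t := by
    ext k
    by_cases h : (k : ℕ) < t <;> simp [h]
  rw [he]
  rcases Nat.lt_or_ge t m with h | h
  · have : (Finset.univ.filter fun k : Fin m => (k : ℕ) < t) = Finset.Iio (⟨t, h⟩ : Fin m) := by
      ext k; simp [Fin.lt_def]
    rw [this, Fin.card_Iio]
  · have : (Finset.univ.filter fun k : Fin m => (k : ℕ) < t) = Finset.univ := by
      ext k
      have := k.isLt
      simp only [Finset.mem_filter, Finset.mem_univ, true_and, iff_true]
      omega
    rw [this, Finset.card_univ, Fintype.card_fin]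
    omega

lemma preceq_snoc_left {n m : ℕ} (i : Fin m → Fin n) (l : Fin n) (i' : Fin (m+1) → Fin n) :
    preceq (Fin.snoc i l) i' ↔
      preceq i (Fin.init i') ∧ ((l : ℕ) = 0 ∨ l = i' (Fin.last m)) := by
  constructor
  · intro h
    refine ⟨fun k => ?_, ?_⟩
    · have := h (Fin.castSucc k)
      simpa [Fin.snoc_castSucc, Fin.init] using this
    · have := h (Fin.last m)
      simpa [Fin.snoc_last] using this
  · rintro ⟨h1, h2⟩ k
    refine Fin.lastCases ?_ ?_ k
    · simpa [Fin.snoc_last] using h2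
    · intro k'
      have := h1 k'
      simpa [Fin.snoc_castSucc, Fin.init] using this

lemma preceq_snoc_right {n m : ℕ} (i : Fin m → Fin n) (l : Fin n) (i' : Fin (m+1) → Fin n) :
    preceq i' (Fin.snoc i l) ↔
      preceq (Fin.init i') i ∧ ((i' (Fin.last m) : ℕ) = 0 ∨ i' (Fin.last m) = l) := by
  constructor
  · intro h
    refine ⟨fun k => ?_, ?_⟩
    · have := h (Fin.castSucc k)
      simpa [Fin.snoc_castSucc, Fin.init] using this
    · have := h (Fin.last m)
      simpa [Fin.snoc_last] using this
  · rintro ⟨h1, h2⟩ k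
    refine Fin.lastCases ?_ ?_ k
    · simpa [Fin.snoc_last] using h2
    · intro k'
      have := h1 k'
      simpa [Fin.snoc_castSucc, Fin.init] using this

lemma subvec_cVec {n m : ℕ} (i' : Fin (m+1) → Fin n) (l : Fin n) :
    subvec (cVec (m+1) i') l =
      if ((l : ℕ) = 0 ∨ l = i' (Fin.last m)) then cVec m (Fin.init i') else 0 := by
  funext i
  simp only [subvec, cVec]
  by_cases h : ((l : ℕ) = 0 ∨ l = i' (Fin.last m)) <;>
    by_cases h2 : preceq i (Fin.init i') <;>
      simp [preceq_snoc_left, h, h2, cVec]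

lemma subvec_dVec {n m : ℕ} (i' : Fin (m+1) → Fin n) (l : Fin n) :
    subvec (dVec (m+1) i') l =
      if ((i' (Fin.last m) : ℕ) = 0 ∨ i' (Fin.last m) = l) then dVec m (Fin.init i') else 0 := by
  funext i
  simp only [subvec, dVec]
  by_cases h : ((i' (Fin.last m) : ℕ) = 0 ∨ i' (Fin.last m) = l) <;>
    by_cases h2 : preceq (Fin.init i') i <;>
      simp [preceq_snoc_right, h, h2, dVec]

lemma wtTuple_snoc {n m : ℕ} (i' : Fin (m+1) → Fin n) :
    wtTuple i' = wtTuple (Fin.init i') + (if (i' (Fin.last m) : ℕ) ≠ 0 then 1 else 0) := by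
  unfold wtTuple
  rw [Finset.card_filter, Finset.card_filter, Fin.sum_univ_castSucc]
  simp [Fin.init]
  refine Finset.sum_congr rfl (fun x _ => ?_)
  split_ifs <;> simp_all

lemma subvec_zero {n m : ℕ} (l : Fin n) :
    subvec (0 : (Fin (m+1) → Fin n) → ZMod 2) l = 0 := rfl

lemma subvec_add {n m : ℕ} (u v : (Fin (m+1) → Fin n) → ZMod 2) (l : Fin n) :
    subvec (u + v) l = subvec u l + subvec v l := rfl

lemma zero_mem_D (n : ℕ) : ∀ m r, (0 : (Fin m → Fin n) → ZMod 2) ∈ BermanD n m r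
  | 0, r => by rw [BermanD]; rfl
  | m+1, r => by
    rw [BermanD]
    split_ifs with h1 h2
    · simp
    · rfl
    · refine ⟨fun l => zero_mem_D n m (r-1), ?_⟩
      have h : (fun i' => ∑ l : Fin n, subvec (0 : (Fin (m+1) → Fin n) → ZMod 2) l i') = 0 := by
        funext i'; simp [subvec]
      rw [h]
      exact zero_mem_D n m r

lemma zero_mem_C (n : ℕ) : ∀ m r, (0 : (Fin m → Fin n) → ZMod 2) ∈ BermanC n m r
  | 0, r => by rw [BermanC]; trivial
  | m+1, r => by
    rw [BermanC]
    split_ifs with h1 h2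
    · exact ⟨0, fun i => rfl⟩
    · trivial
    · exact ⟨0, fun _ => 0, zero_mem_C n m r, fun l _ => zero_mem_C n m (r-1),
        fun l _ => rfl, fun l => by simp [subvec_zero]⟩

lemma D_trivial {n : ℕ} : ∀ {m r : ℕ}, m ≤ r →
    ∀ {v : (Fin m → Fin n) → ZMod 2}, v ∈ BermanD n m r → v = 0 := by
  intro m r hmr v hv
  match m with
  | 0 => rw [BermanD] at hv; exact hv
  | m+1 =>
    rw [BermanD, if_neg (by omega), if_pos hmr] at hv
    exact hv

lemma const_mem_C (n : ℕ) : ∀ m r (c : ZMod 2), (fun _ => c) ∈ BermanC n m r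
  | 0, r, c => by rw [BermanC]; trivial
  | m+1, r, c => by
    rw [BermanC]
    split_ifs with h1 h2
    · exact ⟨c, fun _ => rfl⟩
    · trivial
    · exact ⟨fun _ => c, fun _ => 0, const_mem_C n m r c, fun l _ => zero_mem_C n m (r-1),
        fun l _ => rfl, fun l => by funext i; simp [subvec]⟩

lemma C_mono (n : ℕ) : ∀ m r r', r ≤ r' →
    BermanC n m r ⊆ BermanC n m r'
  | 0, r, r', h => by intro v _; rw [BermanC]; trivial
  | m+1, r, r', h => by
    intro v hv
    rw [BermanC]
    split_ifs with h1 h2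
    · subst h1
      have : r = 0 := by omega
      subst this
      rwa [BermanC, if_pos rfl] at hv
    · trivial
    · rw [BermanC] at hv
      rcases Nat.eq_zero_or_pos r with hr0 | hr1
      · subst hr0
        rw [if_pos rfl] at hv
        obtain ⟨c, hc⟩ := hv
        refine ⟨fun _ => c, fun _ => 0, const_mem_C n m r' c, fun l _ => zero_mem_C n m (r'-1),
          fun l _ => rfl, fun l => ?_⟩
        funext i; simp [subvec, hc]
      · rw [if_neg (by omega), if_neg (by omega)] at hv
        obtain ⟨u, w, hu, hw, hw0, hsub⟩ := hv
        exact ⟨u, w, C_mono n m r r' h hu,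
          fun l hl => C_mono n m (r-1) (r'-1) (by omega) (hw l hl), hw0, hsub⟩

lemma C_add (n : ℕ) : ∀ m r (u v : (Fin m → Fin n) → ZMod 2),
    u ∈ BermanC n m r → v ∈ BermanC n m r → u + v ∈ BermanC n m r
  | 0, r, u, v, _, _ => by rw [BermanC]; trivial
  | m+1, r, u, v, hu, hv => by
    rw [BermanC]
    split_ifs with h1 h2
    · subst h1
      rw [BermanC, if_pos rfl] at hu hv
      obtain ⟨c1, hc1⟩ := hu
      obtain ⟨c2, hc2⟩ := hv
      exact ⟨c1 + c2, fun i => by simp [hc1, hc2]⟩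
    · trivial
    · rw [BermanC, if_neg h1, if_neg h2] at hu hv
      obtain ⟨u1, w1, hu1, hw1, hw01, hs1⟩ := hu
      obtain ⟨u2, w2, hu2, hw2, hw02, hs2⟩ := hv
      refine ⟨u1 + u2, fun l => w1 l + w2 l, C_add n m r u1 u2 hu1 hu2,
        fun l hl => C_add n m (r-1) _ _ (hw1 l hl) (hw2 l hl),
        fun l hl => by show w1 l + w2 l = 0; rw [hw01 l hl, hw02 l hl, add_zero],
        fun l => ?_⟩
      rw [subvec_add, hs1 l, hs2 l]
      show u1 + w1 l + (u2 + w2 l) = u1 + u2 + (w1 l + w2 l)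
      module

lemma zmod2_add_self (x : ZMod 2) : x + x = 0 := by revert x; decide

lemma cVec_mem_D (n : ℕ) : ∀ m r (i' : Fin m → Fin n),
    r + 1 ≤ wtTuple i' → cVec m i' ∈ BermanD n m r
  | 0, r, i', h => by
    exfalso; have := wtTuple_le i'; omega
  | m+1, r, i', h => by
    have hle := wtTuple_le i'
    rw [BermanD]
    split_ifs with h1 h2
    · show ∑ i, cVec (m+1) i' i = 0
      rw [sum_eq_hwt, hwt_cVec, Nat.cast_pow]
      have h2 : ((2:ℕ) : ZMod 2) = 0 := by decide
      rw [h2, zero_pow (by omega)]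
    · exfalso; omega
    · have hsplit := wtTuple_snoc i'
      have hinit : wtTuple i' ≤ wtTuple (Fin.init i') + 1 := by
        rw [hsplit]; split_ifs <;> omega
    
      refine ⟨fun l => ?_, ?_⟩
      · rw [subvec_cVec]
        split_ifs with hP
        · exact cVec_mem_D n m (r-1) _ (by omega)
        · exact zero_mem_D n m (r-1)
      · by_cases ha : (i' (Fin.last m) : ℕ) = 0
        · have hsum : (fun i'' => ∑ l : Fin n, subvec (cVec (m+1) i') l i'')
              = cVec m (Fin.init i') := by
            funext i''
            simp only [subvec_cVec, ite_apply, Pi.zero_apply]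
            have hiff : ∀ l : Fin n, ((l:ℕ) = 0 ∨ l = i' (Fin.last m)) ↔ l = i' (Fin.last m) := by
              intro l
              constructor
              · rintro (h0 | h0)
                · exact Fin.ext (by omega)
                · exact h0
              · exact fun h0 => Or.inr h0
            simp only [hiff]
            rw [Finset.sum_ite_eq' Finset.univ (i' (Fin.last m))
              (fun _ => cVec m (Fin.init i') i''), if_pos (Finset.mem_univ _)]
          rw [hsum]
          refine cVec_mem_D n m r _ ?_
          have : wtTuple i' = wtTuple (Fin.init i') := by
            rw [hsplit, if_neg (by omega)]; omega
          omega
        · have hsum : (fun i'' => ∑ l : Fin n, subvec (cVec (m+1) i') l i'') = 0 := by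
            funext i''
            simp only [subvec_cVec, ite_apply, Pi.zero_apply]
            rw [← Finset.sum_filter]
            have hn0 : 0 < n := (i' (Fin.last m)).pos
            have hfilter : Finset.univ.filter (fun l : Fin n => (l:ℕ) = 0 ∨ l = i' (Fin.last m))
                = {(⟨0, hn0⟩ : Fin n), i' (Fin.last m)} := by
              ext l
              simp only [Finset.mem_filter, Finset.mem_univ, true_and, Finset.mem_insert,
                Finset.mem_singleton]
              constructor
              · rintro (h0 | h0)
                · exact Or.inl (Fin.ext h0)
                · exact Or.inr h0
              · rintro (rfl | rfl)
                · exact Or.inl rfl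
                · exact Or.inr rfl
            rw [hfilter, Finset.sum_pair (by intro he; exact ha (by rw [← he])),
              zmod2_add_self]
          rw [hsum]
          exact zero_mem_D n m r

lemma dVec_mem_C (n : ℕ) : ∀ m r (i' : Fin m → Fin n),
    wtTuple i' ≤ r → dVec m i' ∈ BermanC n m r
  | 0, r, i', h => by rw [BermanC]; trivial
  | m+1, r, i', h => by
    rw [BermanC]
    split_ifs with h1 h2
    · subst h1
      refine ⟨1, fun i => ?_⟩
      have hall : ∀ k, (i' k : ℕ) = 0 := by
        intro k
        by_contra hk
        have h0 : wtTuple i' = 0 := by omega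
        unfold wtTuple at h0
        rw [Finset.card_eq_zero] at h0
        have hkmem : k ∈ Finset.univ.filter (fun k => (i' k : ℕ) ≠ 0) :=
          Finset.mem_filter.mpr ⟨Finset.mem_univ k, hk⟩
        rw [h0] at hkmem
        exact absurd hkmem (Finset.notMem_empty k)
      show (if preceq i' i then (1 : ZMod 2) else 0) = 1
      rw [if_pos (show preceq i' i from fun k => Or.inl (hall k))]
    · trivial
    · have hsplit := wtTuple_snoc i'
      by_cases ha : (i' (Fin.last m) : ℕ) = 0
      · have hwt0 : wtTuple (Fin.init i') = wtTuple i' := by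
          rw [hsplit, if_neg (by omega)]; omega
        refine ⟨dVec m (Fin.init i'), fun _ => 0, dVec_mem_C n m r _ (by omega),
          fun l _ => zero_mem_C n m (r-1), fun l _ => rfl, fun l => ?_⟩
        rw [subvec_dVec, if_pos (Or.inl ha), add_zero]
      · have hwt1 : wtTuple i' = wtTuple (Fin.init i') + 1 := by
          rw [hsplit, if_pos ha]
        by_cases hlast : (i' (Fin.last m) : ℕ) = n - 1
        · refine ⟨dVec m (Fin.init i'),
            fun l => if i' (Fin.last m) = l then 0 else dVec m (Fin.init i'),
            dVec_mem_C n m r _ (by omega), fun l hl => ?_, fun l hl => ?_, fun l => ?_⟩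
          · have hne : ¬ i' (Fin.last m) = l := by
              intro he; rw [he] at hlast; omega
            beta_reduce
            rw [if_neg hne]
            exact dVec_mem_C n m (r-1) _ (by omega)
          · have heq : i' (Fin.last m) = l := Fin.ext (by omega)
            beta_reduce
            rw [if_pos heq]
          · beta_reduce
            rw [subvec_dVec]
            by_cases he : i' (Fin.last m) = l
            · rw [if_pos (Or.inr he), if_pos he, add_zero]
            · rw [if_neg (by rintro (h0 | h0); exacts [ha h0, he h0]), if_neg he]
              funext i
              show (0 : ZMod 2) = dVec m (Fin.init i') i + dVec m (Fin.init i') i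
              rw [zmod2_add_self]
        · refine ⟨0, fun l => if i' (Fin.last m) = l then dVec m (Fin.init i') else 0,
            zero_mem_C n m r, fun l hl => ?_, fun l hl => ?_, fun l => ?_⟩
          · beta_reduce
            split_ifs with he
            · exact dVec_mem_C n m (r-1) _ (by omega)
            · exact zero_mem_C n m (r-1)
          · have hne : ¬ i' (Fin.last m) = l := by
              intro he; rw [he] at hlast; exact hlast hl
            beta_reduce
            rw [if_neg hne]
          · beta_reduce
            rw [subvec_dVec]
            by_cases he : i' (Fin.last m) = l
            · rw [if_pos (Or.inr he), if_pos he, zero_add]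
            · rw [if_neg (by rintro (h0 | h0); exacts [ha h0, he h0]), if_neg he, add_zero]

lemma zmod2_cancel {a b : ZMod 2} (h : a + b = 0) : b = a := by revert a b; decide

lemma D_lb (n : ℕ) : ∀ m r (v : (Fin m → Fin n) → ZMod 2),
    v ∈ BermanD n m r → v ≠ 0 → 2 ^ (r + 1) ≤ hwt v
  | 0, r, v, hv, hne => by rw [BermanD] at hv; exact absurd hv hne
  | m+1, r, v, hv, hne => by
    rw [BermanD] at hv
    split_ifs at hv with h1 h2
    · subst h1
      have hpos := hwt_pos hne
      have hv' : ∑ i, v i = 0 := hv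
      rw [sum_eq_hwt] at hv'
      have hdvd : (2:ℕ) ∣ hwt v := (ZMod.natCast_eq_zero_iff _ 2).mp hv'
      have : (2:ℕ) ^ (0+1) = 2 := by norm_num
      omega
    · exact absurd hv hne
    · obtain ⟨hsub, hsum⟩ := hv
      by_cases hs : (fun i' => ∑ l : Fin n, subvec v l i') = 0
      · obtain ⟨l0, hl0⟩ : ∃ l, subvec v l ≠ 0 := by
          by_contra hall; push_neg at hall; exact hne (eq_zero_of_subvec hall)
        obtain ⟨l1, hl1ne, hl1⟩ : ∃ l1, l1 ≠ l0 ∧ subvec v l1 ≠ 0 := by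
          by_contra hall; push_neg at hall
          apply hl0
          funext i'
          have hz := congrFun hs i'
          rw [Finset.sum_eq_single l0 (fun b _ hb => by rw [hall b hb]; rfl)
            (fun hmem => absurd (Finset.mem_univ l0) hmem)] at hz
          exact hz
        have b0 := D_lb n m (r-1) _ (hsub l0) hl0
        have b1 := D_lb n m (r-1) _ (hsub l1) hl1
        have hsum2 : hwt (subvec v l1) + hwt (subvec v l0) ≤ ∑ l, hwt (subvec v l) := by
          have hss := Finset.sum_le_sum_of_subset (s := ({l1, l0} : Finset (Fin n)))
            (t := Finset.univ) (f := fun l => hwt (subvec v l)) (fun x _ => Finset.mem_univ x)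
          rwa [Finset.sum_pair hl1ne] at hss
        have hr : r - 1 + 1 = r := by omega
        rw [hr] at b0 b1
        rw [hwt_eq_sum_subvec v, pow_succ]
        omega
      · have hb := D_lb n m r _ hsum hs
        have hle : hwt (fun i' => ∑ l : Fin n, subvec v l i') ≤ hwt v := by
          rw [hwt_eq_sum_subvec v]; exact hwt_sumvec_le (fun l => subvec v l)
        exact le_trans hb hle

lemma C_lb (n : ℕ) : ∀ m r, r ≤ m → ∀ v : (Fin m → Fin n) → ZMod 2,
    v ∈ BermanC n m r → v ≠ 0 → n ^ (m - r) ≤ hwt v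
  | 0, r, hr, v, hv, hne => by simpa using hwt_pos hne
  | m+1, r, hr, v, hv, hne => by
    rw [BermanC] at hv
    split_ifs at hv with h1 h2
    · subst h1
      obtain ⟨c, hc⟩ := hv
      have hc1 : c ≠ 0 := by rintro rfl; exact hne (funext fun i => hc i)
      have hall : hwt v = n ^ (m+1) := by
        unfold hwt
        have he : (Finset.univ.filter fun i : Fin (m+1) → Fin n => v i ≠ 0) = Finset.univ := by
          ext i; simp [hc i, hc1]
        rw [he, Finset.card_univ]
        simp [Fintype.card_fun]
      rw [hall]
      simp
    · have h0 : m + 1 - r = 0 := by omega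
      rw [h0, pow_zero]
      exact hwt_pos hne
    · obtain ⟨u, w, hu, hw, hw0, hsub⟩ := hv
      have harith : m - (r-1) = m + 1 - r := by omega
      by_cases hu0 : u = 0
      · obtain ⟨l0, hl0⟩ : ∃ l, subvec v l ≠ 0 := by
          by_contra hall; push_neg at hall; exact hne (eq_zero_of_subvec hall)
        have hlt : (l0 : ℕ) < n - 1 := by
          rcases Nat.lt_or_ge (l0:ℕ) (n-1) with hx | hx
          · exact hx
          · exfalso
            have hval : (l0:ℕ) = n - 1 := by have := l0.isLt; omega
            apply hl0
            rw [hsub l0, hw0 l0 hval, hu0, add_zero]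
        have hwl : w l0 ≠ 0 := by
          intro hz; apply hl0; rw [hsub l0, hz, hu0, add_zero]
        have hb := C_lb n m (r-1) (by omega) _ (hw l0 hlt) hwl
        have hle : hwt (w l0) ≤ hwt v := by
          rw [hwt_eq_sum_subvec v]
          have heq : hwt (w l0) = hwt (subvec v l0) := by rw [hsub l0, hu0, zero_add]
          rw [heq]
          exact Finset.single_le_sum (f := fun l => hwt (subvec v l))
            (fun _ _ => Nat.zero_le _) (Finset.mem_univ l0)
        rw [harith] at hb
        omega
      · by_cases hex : ∃ l : Fin n, (l:ℕ) < n - 1 ∧ w l = u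
        · obtain ⟨l1, hl1, hweq⟩ := hex
          have hb := C_lb n m (r-1) (by omega) u (by rw [← hweq]; exact hw l1 hl1) hu0
          have hnpos : 0 < n := l1.pos
          have hll : subvec v (⟨n-1, by omega⟩ : Fin n) = u := by
            rw [hsub _, hw0 (⟨n-1, by omega⟩ : Fin n) rfl, add_zero]
          have hle : hwt u ≤ hwt v := by
            rw [hwt_eq_sum_subvec v]
            have heq : hwt u = hwt (subvec v (⟨n-1, by omega⟩ : Fin n)) := by rw [hll]
            rw [heq]
            exact Finset.single_le_sum (f := fun l => hwt (subvec v l))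
              (fun _ _ => Nat.zero_le _) (Finset.mem_univ _)
          rw [harith] at hb
          omega
        · push_neg at hex
          have hmem : ∀ l, subvec v l ∈ BermanC n m r := by
            intro l
            rw [hsub l]
            rcases Nat.lt_or_ge (l:ℕ) (n-1) with hx | hx
            · exact C_add n m r u (w l) hu (C_mono n m (r-1) r (by omega) (hw l hx))
            · have hval : (l:ℕ) = n-1 := by have := l.isLt; omega
              rw [hw0 l hval, add_zero]; exact hu
          have hne' : ∀ l, subvec v l ≠ 0 := by
            intro l h0
            rcases Nat.lt_or_ge (l:ℕ) (n-1) with hx | hx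
            · apply hex l hx
              have hz : u + w l = 0 := by rw [← hsub l]; exact h0
              funext i
              exact zmod2_cancel (congrFun hz i)
            · have hval : (l:ℕ) = n-1 := by have := l.isLt; omega
              apply hu0
              have : u = subvec v l := by rw [hsub l, hw0 l hval, add_zero]
              exact this.trans h0
          have hb : ∀ l, n ^ (m - r) ≤ hwt (subvec v l) :=
            fun l => C_lb n m r (by omega) _ (hmem l) (hne' l)
          rw [hwt_eq_sum_subvec v]
          have hc : (m+1) - r = (m-r) + 1 := by omega
          rw [hc, pow_succ]
          have hns := Finset.card_nsmul_le_sum Finset.univ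
            (fun l => hwt (subvec v l)) (n^(m-r)) (fun l _ => hb l)
          simp only [Finset.card_univ, Fintype.card_fin, smul_eq_mul] at hns
          calc n ^ (m-r) * n = n * n ^ (m-r) := Nat.mul_comm _ _
            _ ≤ _ := hns

/-- minimum distances of the Berman and dual Berman codes. -/
theorem berman_minDist (n m r : ℕ) (hn : 2 ≤ n) (hm : 1 ≤ m) :
    (r ≤ m - 1 →
      IsLeast {k : ℕ | ∃ v ∈ BermanD n m r, v ≠ 0 ∧ hwt v = k} (2 ^ (r + 1))) ∧
    (r ≤ m →
      IsLeast {k : ℕ | ∃ v ∈ BermanC n m r, v ≠ 0 ∧ hwt v = k} (n ^ (m - r))) := by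
  constructor
  · intro hr
    constructor
    · obtain ⟨i', hi'⟩ := exists_wtTuple (m := m) hn (r+1) (by omega)
      refine ⟨cVec m i', cVec_mem_D n m r i' (by omega), ?_, ?_⟩
      · intro h0
        have h1 : cVec m i' i' = 1 := if_pos (show preceq i' i' from fun k => Or.inr rfl)
        rw [h0] at h1
        exact one_ne_zero h1.symm
      · rw [hwt_cVec, hi']
    · rintro k ⟨v, hv, hvne, rfl⟩
      exact D_lb n m r v hv hvne
  · intro hr
    constructor
    · obtain ⟨i', hi'⟩ := exists_wtTuple (m := m) hn r (by omega)
      refine ⟨dVec m i', dVec_mem_C n m r i' (by omega), ?_, ?_⟩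
      · intro h0
        have h1 : dVec m i' i' = 1 := if_pos (show preceq i' i' from fun k => Or.inr rfl)
        rw [h0] at h1
        exact one_ne_zero h1.symm
      · rw [hwt_dVec, hi']
    · rintro k ⟨v, hv, hvne, rfl⟩
      exact C_lb n m r hr v hv hvne
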